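/- For t = (t₁, …, tₙ) ∈ ℝⁿ, the matrix exp(Σᵢ tᵢ R_{i,n+i}) is block diagonal (i.e. its top-right n×m block and bottom-left m×n block vanish) if and only if tᵢ ∈ πℤ for every i. Consequently, the unit lattice Γ = {A ∈ 𝔞 : exp(A) is block diagonal with blocks in O(n) and O(m)}, where 𝔞 is the real span of R_{1,n+1}, …, R_{n,2n}, equals {Σᵢ mᵢ π R_{i,n+i} : mᵢ ∈ ℤ}. -/

import Mathlib

open Matrix

noncomputable section

/-- The matrix `R_{i,n+i}`: entry `1` at `(i, n+i)`, entry `-1` at `(n+i, i)`, `0` elsewhere. -/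
def R (n m : ℕ) (i : Fin n) : Matrix (Fin n ⊕ Fin m) (Fin n ⊕ Fin m) ℝ :=
  Matrix.of fun a b =>
    match a, b with
    | Sum.inl k, Sum.inr j => if k = i ∧ (j : ℕ) = (i : ℕ) then 1 else 0
    | Sum.inr j, Sum.inl k => if k = i ∧ (j : ℕ) = (i : ℕ) then -1 else 0
    | _, _ => 0

namespace Stmt9Aux

variable {n m : ℕ}

/-- The element of `Fin m` with the same value as `i : Fin n`, given `n ≤ m`. -/
def emb (hnm : n ≤ m) (i : Fin n) : Fin m := ⟨(i : ℕ), lt_of_lt_of_le i.isLt hnm⟩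

lemma emb_inj (hnm : n ≤ m) {i j : Fin n} (h : emb hnm i = emb hnm j) : i = j := by
  have := congrArg Fin.val h
  exact Fin.ext this

lemma R_eq (hnm : n ≤ m) (i : Fin n) :
    R n m i = single (Sum.inl i) (Sum.inr (emb hnm i)) (1 : ℝ)
      - single (Sum.inr (emb hnm i)) (Sum.inl i) (1 : ℝ) := by
  ext a b
  rcases a with k | j <;> rcases b with l | j' <;>
    simp [R, single, emb, Fin.ext_iff, and_comm, eq_comm] <;> split <;> simp

lemma R_mul_ne (hnm : n ≤ m) {i j : Fin n} (h : i ≠ j) : R n m i * R n m j = 0 := by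
  have h3 : emb hnm i ≠ emb hnm j := fun hh => h (emb_inj hnm hh)
  rw [R_eq hnm i, R_eq hnm j]
  simp [sub_mul, mul_sub, h3, Ne.symm h, h]

lemma Rsq (hnm : n ≤ m) (i : Fin n) :
    R n m i * R n m i
      = -(single (Sum.inl i) (Sum.inl i) (1 : ℝ)
          + single (Sum.inr (emb hnm i)) (Sum.inr (emb hnm i)) (1 : ℝ)) := by
  rw [R_eq hnm i]
  simp [sub_mul, mul_sub]
  abel

lemma Rcube (hnm : n ≤ m) (i : Fin n) :
    R n m i * R n m i * R n m i = -(R n m i) := by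
  rw [Rsq hnm i, R_eq hnm i]
  simp [neg_mul, add_mul, mul_sub]
  abel

set_option maxHeartbeats 1000000 in
lemma exp_cube {p : Type*} [Fintype p] [DecidableEq p]
    (A : Matrix p p ℝ) (hA : A * A * A = -A) (t : ℝ) :
    NormedSpace.exp (t • A)
      = 1 + Real.sin t • A + (1 - Real.cos t) • (A * A) := by
  have hodd : ∀ k : ℕ, A ^ (2 * k + 1) = ((-1 : ℝ)) ^ k • A := by
    intro k
    induction k with
    | zero => simp
    | succ k ih =>
      have h2 : 2 * (k + 1) + 1 = (2 * k + 1) + 1 + 1 := by ring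
      rw [h2, pow_succ, pow_succ, ih, smul_mul_assoc, smul_mul_assoc, hA]
      simp [pow_succ, mul_smul]
  have heven : ∀ k : ℕ, A ^ (2 * (k + 1)) = ((-1 : ℝ)) ^ k • (A * A) := by
    intro k
    have h2 : 2 * (k + 1) = (2 * k + 1) + 1 := by ring
    rw [h2, pow_succ, hodd k, smul_mul_assoc]
  rw [NormedSpace.exp_eq_tsum ℝ]
  refine HasSum.tsum_eq ?_
  have ho : HasSum (fun k : ℕ => (((2 * k + 1).factorial : ℝ)⁻¹) • (t • A) ^ (2 * k + 1))
      (Real.sin t • A) := by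
    have h := (Real.hasSum_sin t).smul_const (M := Matrix p p ℝ) A
    convert h using 2 with k
    rw [smul_pow, hodd k, smul_smul, smul_smul]
    congr 1
    rw [div_eq_mul_inv]
    ring
  have hc : HasSum (fun k : ℕ => (((2 * (k + 1)).factorial : ℝ)⁻¹) • (t • A) ^ (2 * (k + 1)))
      ((1 - Real.cos t) • (A * A)) := by
    have h1 : HasSum
        (fun k : ℕ => (-1 : ℝ) ^ (k + 1) * t ^ (2 * (k + 1)) / ((2 * (k + 1)).factorial))
        (Real.cos t - 1) := by
      refine (hasSum_nat_add_iff
        (f := fun k : ℕ => (-1 : ℝ) ^ k * t ^ (2 * k) / ((2 * k).factorial)) 1).mpr ?_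
      simpa using Real.hasSum_cos t
    have h3 := (h1.neg).smul_const (M := Matrix p p ℝ) (A * A)
    convert h3 using 2 with k
    · rw [smul_pow, heven k, smul_smul, smul_smul]
      congr 1
      rw [div_eq_mul_inv]
      ring
    · rw [neg_sub]
  have he : HasSum (fun k : ℕ => (((2 * k).factorial : ℝ)⁻¹) • (t • A) ^ (2 * k))
      (1 + (1 - Real.cos t) • (A * A)) := by
    have h := (hasSum_nat_add_iff
      (f := fun k : ℕ => (((2 * k).factorial : ℝ)⁻¹) • (t • A) ^ (2 * k)) 1).mp hc
    simpa [add_comm] using h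
  have H := HasSum.even_add_odd (f := fun k : ℕ => ((k.factorial : ℝ)⁻¹) • (t • A) ^ k) he ho
  convert H using 1
  · rfl
  · abel

/-- The summand in the closed form of the exponential. -/
def S (n m : ℕ) (t : Fin n → ℝ) (i : Fin n) : Matrix (Fin n ⊕ Fin m) (Fin n ⊕ Fin m) ℝ :=
  Real.sin (t i) • R n m i + (1 - Real.cos (t i)) • (R n m i * R n m i)

lemma S_mul_S (hnm : n ≤ m) (t : Fin n → ℝ) {i j : Fin n} (h : i ≠ j) :
    S n m t i * S n m t j = 0 := by
  have h1 : R n m i * R n m j = 0 := R_mul_ne hnm h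
  have h2 : R n m i * (R n m j * R n m j) = 0 := by rw [← mul_assoc, h1, Matrix.zero_mul]
  have h3 : R n m i * R n m i * R n m j = 0 := by rw [mul_assoc, h1, Matrix.mul_zero]
  have h4 : R n m i * R n m i * (R n m j * R n m j) = 0 := by
    rw [mul_assoc, h2, Matrix.mul_zero]
  simp [S, add_mul, mul_add, smul_mul_assoc, Matrix.mul_smul, h1, h2, h3, h4]

lemma exp_sum (hnm : n ≤ m) (t : Fin n → ℝ) :
    NormedSpace.exp (∑ i, t i • R n m i) = 1 + ∑ i, S n m t i := by
  have key : ∀ s : Finset (Fin n),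
      NormedSpace.exp (∑ i ∈ s, t i • R n m i) = 1 + ∑ i ∈ s, S n m t i := by
    intro s
    induction s using Finset.induction_on with
    | empty => simp [NormedSpace.exp_zero]
    | @insert a s ha ih =>
      have hcomm : Commute (t a • R n m a) (∑ i ∈ s, t i • R n m i) := by
        refine Commute.sum_right _ _ _ fun i hi => ?_
        have hai : a ≠ i := fun hh => ha (hh ▸ hi)
        have : R n m a * R n m i = R n m i * R n m a := by
          rw [R_mul_ne hnm hai, R_mul_ne hnm (Ne.symm hai)]
        exact (Commute.smul_left (Commute.smul_right this _) _)
      rw [Finset.sum_insert ha, Finset.sum_insert ha,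
        Matrix.exp_add_of_commute _ _ hcomm, ih, exp_cube (R n m a) (Rcube hnm a) (t a)]
      have hSa : (1 : Matrix (Fin n ⊕ Fin m) (Fin n ⊕ Fin m) ℝ) + Real.sin (t a) • R n m a
          + (1 - Real.cos (t a)) • (R n m a * R n m a) = 1 + S n m t a := by
        rw [S, add_assoc]
      rw [hSa]
      have hz : S n m t a * (∑ i ∈ s, S n m t i) = 0 := by
        rw [Finset.mul_sum]
        refine Finset.sum_eq_zero fun i hi => ?_
        exact S_mul_S hnm t (fun hh => ha (hh ▸ hi))
      rw [add_mul, one_mul, mul_add, mul_one, hz, add_zero]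
      abel
  exact key Finset.univ

lemma blocks12 (hnm : n ≤ m) (t : Fin n → ℝ) :
    (NormedSpace.exp (∑ i, t i • R n m i)).toBlocks₁₂
      = Matrix.of fun (k : Fin n) (j : Fin m) =>
          if (j : ℕ) = (k : ℕ) then Real.sin (t k) else 0 := by
  rw [exp_sum hnm t]
  simp only [S, Rsq hnm]
  ext k j
  simp only [toBlocks₁₂, of_apply, Matrix.add_apply, Matrix.one_apply, Matrix.sum_apply,
    Matrix.smul_apply, Matrix.neg_apply, single, R, smul_eq_mul]
  simp [ite_and, Finset.sum_ite_eq, mul_ite]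

lemma blocks21 (hnm : n ≤ m) (t : Fin n → ℝ) :
    (NormedSpace.exp (∑ i, t i • R n m i)).toBlocks₂₁
      = Matrix.of fun (j : Fin m) (k : Fin n) =>
          if (j : ℕ) = (k : ℕ) then -Real.sin (t k) else 0 := by
  rw [exp_sum hnm t]
  simp only [S, Rsq hnm]
  ext j k
  simp only [toBlocks₂₁, of_apply, Matrix.add_apply, Matrix.one_apply, Matrix.sum_apply,
    Matrix.smul_apply, Matrix.neg_apply, single, R, smul_eq_mul]
  simp [ite_and, Finset.sum_ite_eq, mul_ite]

lemma blocks11 (hnm : n ≤ m) (t : Fin n → ℝ) :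
    (NormedSpace.exp (∑ i, t i • R n m i)).toBlocks₁₁
      = Matrix.diagonal fun k => Real.cos (t k) := by
  rw [exp_sum hnm t]
  simp only [S, Rsq hnm]
  ext k l
  simp only [toBlocks₁₁, of_apply, Matrix.add_apply, Matrix.one_apply, Matrix.sum_apply,
    Matrix.smul_apply, Matrix.neg_apply, single, R, Matrix.diagonal_apply, smul_eq_mul]
  by_cases hkl : k = l
  · subst hkl
    simp [ite_and, Finset.sum_ite_eq', mul_ite]
  · simp [ite_and, Finset.sum_ite_eq', hkl, Ne.symm hkl, fun hh : l = k => hkl (hh.symm)]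

lemma blocks22 (hnm : n ≤ m) (t : Fin n → ℝ) :
    (NormedSpace.exp (∑ i, t i • R n m i)).toBlocks₂₂
      = Matrix.diagonal fun j : Fin m =>
          if h : (j : ℕ) < n then Real.cos (t ⟨(j : ℕ), h⟩) else 1 := by
  rw [exp_sum hnm t]
  simp only [S, Rsq hnm]
  ext j j'
  simp only [toBlocks₂₂, of_apply, Matrix.add_apply, Matrix.one_apply, Matrix.sum_apply,
    Matrix.smul_apply, Matrix.neg_apply, single, R, Matrix.diagonal_apply,
    Matrix.zero_apply, emb, smul_eq_mul]
  by_cases hjj : j = j'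
  · subst hjj
    simp only [if_pos rfl, Sum.inr.injEq, Fin.ext_iff, and_self]
    by_cases hn : (j : ℕ) < n
    · rw [Finset.sum_eq_single (⟨(j : ℕ), hn⟩ : Fin n)]
      · simp [dif_pos hn]
      · intro b _ hb
        have h1 : ¬((b : ℕ) = (j : ℕ)) := fun hh => hb (Fin.ext hh)
        have h1' : ¬((j : ℕ) = (b : ℕ)) := fun hh => h1 hh.symm
        simp [Fin.ext_iff, h1, h1']
      · simp
    · rw [Finset.sum_eq_zero, dif_neg hn]
      · simp
      · intro b _
        have h1 : ¬((b : ℕ) = (j : ℕ)) := fun hh => hn (hh ▸ b.isLt)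
        have h1' : ¬((j : ℕ) = (b : ℕ)) := fun hh => h1 hh.symm
        simp [Fin.ext_iff, h1, h1']
  · rw [Finset.sum_eq_zero]
    · simp [hjj]
    · intro b _
      by_cases h1 : (b : ℕ) = (j : ℕ)
      · have h2 : ¬((b : ℕ) = (j' : ℕ)) := fun hh => hjj (Fin.ext (h1.symm.trans hh))
        have h2' : ¬((j' : ℕ) = (b : ℕ)) := fun hh => h2 hh.symm
        simp [Fin.ext_iff, h1, h2, h2']
        exact fun hh => absurd (Fin.ext hh) hjj
      · have h1' : ¬((j : ℕ) = (b : ℕ)) := fun hh => h1 hh.symm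
        simp [Fin.ext_iff, h1, h1']

end Stmt9Aux

/-- `exp(Σᵢ tᵢ R_{i,n+i})` is block diagonal iff every `tᵢ ∈ πℤ`; consequently the unit
lattice `Γ = {A ∈ 𝔞 : exp A ∈ O(n) × O(m)}` equals `{Σᵢ mᵢ π R_{i,n+i} : mᵢ ∈ ℤ}`. -/
theorem stmt9 (n m : ℕ) (hn : 0 < n) (hnm : n ≤ m) :
    (∀ t : Fin n → ℝ,
      ((NormedSpace.exp (∑ i, t i • R n m i)).toBlocks₁₂ = 0 ∧
       (NormedSpace.exp (∑ i, t i • R n m i)).toBlocks₂₁ = 0) ↔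
      ∀ i, ∃ k : ℤ, t i = k * Real.pi) ∧
    {A : Matrix (Fin n ⊕ Fin m) (Fin n ⊕ Fin m) ℝ |
        (∃ t : Fin n → ℝ, A = ∑ i, t i • R n m i) ∧
        (NormedSpace.exp A).toBlocks₁₂ = 0 ∧
        (NormedSpace.exp A).toBlocks₂₁ = 0 ∧
        ((NormedSpace.exp A).toBlocks₁₁)ᵀ * (NormedSpace.exp A).toBlocks₁₁ = 1 ∧
        ((NormedSpace.exp A).toBlocks₂₂)ᵀ * (NormedSpace.exp A).toBlocks₂₂ = 1} =
      {A : Matrix (Fin n ⊕ Fin m) (Fin n ⊕ Fin m) ℝ |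
        ∃ c : Fin n → ℤ, A = ∑ i, ((c i : ℝ) * Real.pi) • R n m i} := by
  have part1 : ∀ t : Fin n → ℝ,
      ((NormedSpace.exp (∑ i, t i • R n m i)).toBlocks₁₂ = 0 ∧
       (NormedSpace.exp (∑ i, t i • R n m i)).toBlocks₂₁ = 0) ↔
      ∀ i, ∃ k : ℤ, t i = k * Real.pi := by
    intro t
    constructor
    · rintro ⟨h12, -⟩ i
      rw [Stmt9Aux.blocks12 hnm t] at h12
      have h := congrArg (fun M => M i (Stmt9Aux.emb hnm i)) h12
      have hs : Real.sin (t i) = 0 := by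
        simpa [Stmt9Aux.emb] using h
      rcases Real.sin_eq_zero_iff.mp hs with ⟨k, hk⟩
      exact ⟨k, hk.symm⟩
    · intro h
      have hsin : ∀ i, Real.sin (t i) = 0 := by
        intro i
        rcases h i with ⟨k, hk⟩
        rw [hk]
        exact Real.sin_int_mul_pi k
      constructor
      · rw [Stmt9Aux.blocks12 hnm t]
        ext k j
        simp [hsin k]
      · rw [Stmt9Aux.blocks21 hnm t]
        ext j k
        simp [hsin k]
  refine ⟨part1, ?_⟩
  ext A
  simp only [Set.mem_setOf_eq]
  constructor
  · rintro ⟨⟨t, rfl⟩, h12, h21, -, -⟩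
    have h := (part1 t).mp ⟨h12, h21⟩
    choose c hc using h
    refine ⟨c, ?_⟩
    refine Finset.sum_congr rfl fun i _ => ?_
    rw [hc i]
  · rintro ⟨c, rfl⟩
    set t : Fin n → ℝ := fun i => (c i : ℝ) * Real.pi with ht
    have hsum : (∑ i, ((c i : ℝ) * Real.pi) • R n m i) = ∑ i, t i • R n m i := rfl
    have hsin : ∀ i, Real.sin (t i) = 0 := fun i => Real.sin_int_mul_pi (c i)
    have hcos2 : ∀ i, Real.cos (t i) * Real.cos (t i) = 1 := by
      intro i
      nlinarith [Real.sin_sq_add_cos_sq (t i), hsin i]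
    rw [hsum]
    refine ⟨⟨t, rfl⟩, ?_, ?_, ?_, ?_⟩
    · rw [Stmt9Aux.blocks12 hnm t]
      ext k j
      simp [hsin k]
    · rw [Stmt9Aux.blocks21 hnm t]
      ext j k
      simp [hsin k]
    · rw [Stmt9Aux.blocks11 hnm t, Matrix.diagonal_transpose, Matrix.diagonal_mul_diagonal]
      have heq : (fun k : Fin n => Real.cos (t k) * Real.cos (t k)) = fun _ => (1 : ℝ) :=
        funext hcos2
      rw [heq, Matrix.diagonal_one]
    · rw [Stmt9Aux.blocks22 hnm t, Matrix.diagonal_transpose, Matrix.diagonal_mul_diagonal]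
      have heq : (fun j : Fin m =>
          (if h : (j : ℕ) < n then Real.cos (t ⟨(j : ℕ), h⟩) else 1) *
            (if h : (j : ℕ) < n then Real.cos (t ⟨(j : ℕ), h⟩) else 1)) = fun _ => (1 : ℝ) := by
        funext j
        by_cases h : (j : ℕ) < n
        · rw [dif_pos h]
          exact hcos2 _
        · rw [dif_neg h]
          simp
      rw [heq, Matrix.diagonal_one]
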